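/- Let κ be a field of characteristic p > 0 on which a finite p-group G acts by field automorphisms. Then every simple module over the skew group ring κ⟨G⟩ is one-dimensional over κ with trivial G-action, i.e., isomorphic to κ. -/

import Mathlib

/-- `B` is (isomorphic to) the skew group ring `R⟨G⟩` of the action
`σ : G →* RingAut R`: it contains `R` via `ι`, contains `G` as units via `u`,
with the intertwining relation `g · a = σ_g(a) · g`, and is free as a left
`R`-module with basis `G` (every element has a unique representation
`Σ_g a_g · g`). -/
structure IsSkewGroupRing (R : Type*) [Ring R] (G : Type*) [Group G]
    (σ : G →* RingAut R) (B : Type*) [Ring B] : Type _ where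
  ι : R →+* B
  u : G →* Bˣ
  comm : ∀ (g : G) (a : R), (u g : B) * ι a = ι (σ g a) * (u g : B)
  repr : ∀ b : B, ∃! f : G →₀ R, b = f.sum fun g a => ι a * (u g : B)

/-- Let `κ` be a field of characteristic `p > 0` on which a finite `p`-group `G`
acts by field automorphisms.  Then every simple module over the skew group ring
`κ⟨G⟩` is one-dimensional over `κ` with trivial `G`-action, i.e. isomorphic to `κ`:
it is spanned over `κ` by a nonzero `G`-fixed vector. -/
theorem simple_module_of_skewGroupRing_pGroup
    (κ : Type*) [Field κ] (p : ℕ) [Fact p.Prime] [CharP κ p]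
    (G : Type*) [Group G] [Fintype G] (hG : IsPGroup p G)
    (σ : G →* RingAut κ) (B : Type*) [Ring B]
    (h : IsSkewGroupRing κ G σ B)
    (M : Type*) [AddCommGroup M] [Module B M] (hM : IsSimpleModule B M) :
    ∃ m : M, m ≠ 0 ∧ (∀ g : G, (h.u g : B) • m = m) ∧
      ∀ x : M, ∃ a : κ, x = h.ι a • m := by
  haveI : NeZero p := ⟨(Fact.out : p.Prime).ne_zero⟩
  -- M is p-torsion
  have hp : ∀ x : M, p • x = 0 := by
    intro x
    have hB : ((p : ℕ) : B) = 0 := by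
      rw [← map_natCast h.ι p, CharP.cast_eq_zero κ p, map_zero]
    rw [← Nat.cast_smul_eq_nsmul B, hB, zero_smul]
  haveI : Module (ZMod p) M := AddCommGroup.zmodModule hp
  -- a nonzero element
  haveI := IsSimpleModule.nontrivial B M
  obtain ⟨m, hm⟩ := exists_ne (0 : M)
  -- the span of the orbit of m
  set V : Submodule (ZMod p) M :=
    Submodule.span (ZMod p) (Set.range fun g : G => (h.u g : B) • m) with hV
  have hstab : ∀ g : G, ∀ x : M, x ∈ V → (h.u g : B) • x ∈ V := by
    intro g x hx
    let Lg : M →ₗ[ZMod p] M :=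
      (DistribSMul.toAddMonoidHom M ((h.u g : B))).toZModLinearMap p
    have hmap : V.map Lg ≤ V := by
      rw [hV, Submodule.map_span, Submodule.span_le]
      rintro _ ⟨_, ⟨g', rfl⟩, rfl⟩
      refine Submodule.subset_span ⟨g * g', ?_⟩
      show (h.u (g * g') : B) • m = Lg ((h.u g' : B) • m)
      show (h.u (g * g') : B) • m = (h.u g : B) • ((h.u g' : B) • m)
      rw [map_mul, Units.val_mul, mul_smul]
    exact hmap ⟨x, hx, rfl⟩
  have hmV : m ∈ V := by
    refine Submodule.subset_span ⟨1, ?_⟩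
    show (h.u 1 : B) • m = m
    rw [map_one, Units.val_one, one_smul]
  -- V is finite
  haveI : Module.Finite (ZMod p) V :=
    Module.Finite.span_of_finite _ (Set.finite_range _)
  haveI : Finite V := Module.finite_of_finite (ZMod p)
  haveI : Nontrivial V := ⟨⟨⟨m, hmV⟩, 0, by simp [hm]⟩⟩
  -- G acts on V
  letI : MulAction G V :=
    { smul := fun g v => ⟨(h.u g : B) • (v : M), hstab g _ v.2⟩
      one_smul := fun v => by
        ext
        show (h.u 1 : B) • (v : M) = v
        rw [map_one, Units.val_one, one_smul]
      mul_smul := fun g g' v => by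
        ext
        show (h.u (g * g') : B) • (v : M) = (h.u g : B) • ((h.u g' : B) • (v : M))
        rw [map_mul, Units.val_mul, mul_smul] }
  -- counting fixed points
  have hdvdV : p ∣ Nat.card V := by
    haveI := Fintype.ofFinite V
    rw [Nat.card_eq_fintype_card, Module.card_eq_pow_finrank (K := ZMod p) (V := V), ZMod.card]
    exact dvd_pow_self p Module.finrank_pos.ne'
  have h0fix : (0 : V) ∈ MulAction.fixedPoints G V := by
    intro g
    ext
    show (h.u g : B) • ((0 : V) : M) = ((0 : V) : M)
    simp
  obtain ⟨v, hvfix, hvne⟩ :=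
    hG.exists_fixed_point_of_prime_dvd_card_of_fixed_point V hdvdV h0fix
  set m₀ : M := ((v : V) : M) with hm₀
  have hm₀ne : m₀ ≠ 0 := by
    intro hz
    exact hvne (Subtype.ext hz).symm
  have hfix : ∀ g : G, (h.u g : B) • m₀ = m₀ := fun g =>
    congrArg (Subtype.val : V → M) (hvfix g)
  -- the κ-line through m₀ is a B-submodule
  have key : ∀ (g : G) (c a : κ),
      (h.ι c * (h.u g : B)) • (h.ι a • m₀) = h.ι (c * σ g a) • m₀ := by
    intro g c a
    rw [mul_smul, ← mul_smul (h.u g : B), h.comm, mul_smul, hfix, ← mul_smul, ← map_mul]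
  let φ : κ →+ M :=
    { toFun := fun a => h.ι a • m₀
      map_zero' := by simp
      map_add' := fun a b => by
        show h.ι (a + b) • m₀ = h.ι a • m₀ + h.ι b • m₀
        rw [map_add, add_smul] }
  let N : Submodule B M :=
    { carrier := Set.range φ
      add_mem' := by rintro _ _ ⟨a, rfl⟩ ⟨b, rfl⟩; exact ⟨a + b, map_add φ a b⟩
      zero_mem' := ⟨0, map_zero φ⟩
      smul_mem' := by
        rintro b _ ⟨a, rfl⟩
        obtain ⟨f, hf, -⟩ := h.repr b
        refine ⟨f.sum fun g c => c * σ g a, ?_⟩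
        show h.ι (f.sum fun g c => c * σ g a) • m₀ = b • (h.ι a • m₀)
        rw [hf, Finsupp.sum, Finsupp.sum, map_sum h.ι, Finset.sum_smul, Finset.sum_smul]
        refine Finset.sum_congr rfl fun g _ => ?_
        exact (key g (f g) a).symm }
  have hN : N = ⊤ := by
    rcases hM.1.2 N with hbot | htop
    · exfalso
      apply hm₀ne
      have hmem : m₀ ∈ N := ⟨1, by show h.ι 1 • m₀ = m₀; rw [map_one, one_smul]⟩
      rw [hbot] at hmem
      simpa using hmem
    · exact htop
  refine ⟨m₀, hm₀ne, hfix, fun x => ?_⟩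
  have hx : x ∈ N := hN ▸ Submodule.mem_top
  obtain ⟨a, ha⟩ := hx
  exact ⟨a, ha.symm⟩
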